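/- Let n ≥ 1, d ≥ 1, and for each α ∈ {1,…,d} let (a^α, b^α) ∈ ℂⁿ × ℂⁿ with G_j^α := 1 + Σ_{k=j}^n a_k^α b_k^α, and choose nonzero s_j^α ∈ ℂ with (s_j^α)² = G_j^α and s_{n+1}^α = 1; define the invertible triangular matrices g₊,α and k_α as below. Define the column vectors Â^α := g₊,d⁻¹ ⋯ g₊,α⁻¹ a^α and the row vectors B̂^α := (b^α)ᵀ k_α⁻¹ k_{α+1}⁻¹ ⋯ k_d⁻¹. Then 1ₙ − Σ_{α=1}^d Â^α B̂^α = (g₊,1 ⋯ g₊,d)⁻¹ (k_1⁻¹ ⋯ k_d⁻¹), where Â^α B̂^α is the n×n product of the column Â^α with the row B̂^α. -/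

import Mathlib

open Matrix BigOperators

noncomputable section

attribute [local instance] Matrix.normedAddCommGroup Matrix.normedSpace

/-- complex-valued sign of an integer, with `csgn 0 = 0`. -/
def csgn (m : ℤ) : ℂ := (m.sign : ℂ)

/-- Kronecker delta with values in `ℂ`. -/
def cdelta {K : Type*} [DecidableEq K] (i j : K) : ℂ := if i = j then 1 else 0

-- telescoping helper
lemma tele (n : ℕ) (S : Fin (n+1) → ℂ) (t : Fin n) :
    ∑ m : Fin n, (if (t:ℕ) < (m:ℕ) then ((S m.succ ^ 2)⁻¹ - (S m.castSucc ^ 2)⁻¹) else 0)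
      = (S (Fin.last n) ^ 2)⁻¹ - (S t.succ ^ 2)⁻¹ := by
  set f : ℕ → ℂ := fun i => if h : i < n + 1 then (S ⟨i, h⟩ ^ 2)⁻¹ else 0 with hf
  have key : ∀ m : Fin n, (if (t:ℕ) < (m:ℕ) then ((S m.succ ^ 2)⁻¹ - (S m.castSucc ^ 2)⁻¹) else 0)
      = (fun i : ℕ => if (t:ℕ) < i then (f (i+1) - f i) else 0) (m : ℕ) := by
    intro m
    have h1 : ((m:ℕ)+1) < n + 1 := by omega
    have h2 : (m:ℕ) < n + 1 := by omega
    simp only [hf, dif_pos h1, dif_pos h2]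
    congr 1
  rw [Finset.sum_congr rfl (fun m _ => key m),
    Fin.sum_univ_eq_sum_range (fun i : ℕ => if (t:ℕ) < i then (f (i+1) - f i) else 0) n,
    ← Finset.sum_filter]
  have hfil : (Finset.range n).filter (fun i => (t:ℕ) < i) = Finset.Ico ((t:ℕ)+1) n := by
    ext i; simp [Finset.mem_Ico]; omega
  rw [hfil, Finset.sum_Ico_eq_sub _ (by omega : (t:ℕ)+1 ≤ n), Finset.sum_range_sub,
    Finset.sum_range_sub]
  have hn : f n = (S (Fin.last n) ^ 2)⁻¹ := by simp [hf, Fin.last]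
  have ht : f ((t:ℕ)+1) = (S t.succ ^ 2)⁻¹ := by
    have : ((t:ℕ)+1) < n + 1 := by omega
    simp only [hf, dif_pos this]; congr 1
  rw [hn, ht]; abel

lemma mul_key (n : ℕ) (A B : Fin n → ℂ) (S : Fin (n+1) → ℂ) (hS0 : ∀ j, S j ≠ 0)
    (hG : ∀ j : Fin n, S j.castSucc ^ 2 = S j.succ ^ 2 + A j * B j)
    (hlast : S (Fin.last n) = 1)
    (g k : Matrix (Fin n) (Fin n) ℂ)
    (hg : ∀ j l, g j l = if j = l then S j.castSucc / S j.succ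
      else if j < l then A j * B l / (S l.castSucc * S l.succ) else 0)
    (hk : ∀ j l, k j l = if j = l then S j.castSucc / S j.succ
      else if l < j then A j * B l / (S j.castSucc * S j.succ) else 0) :
    g * k = 1 + vecMulVec A B := by
  ext j l
  set t : Fin n := max j l with ht
  have claim1 : ∀ m : Fin n, g j m * k m l =
      (if m = t then (if j = l then S j.castSucc ^ 2 else A j * B l) / S t.succ ^ 2 else 0)
      + A j * B l * (if (t:ℕ) < (m:ℕ) then ((S m.succ ^ 2)⁻¹ - (S m.castSucc ^ 2)⁻¹) else 0) := by
    intro m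
    rcases lt_trichotomy m t with hmt | hmt | hmt
    · -- m < t : one of the factors is zero
      have hnm : ¬ (m = t) := ne_of_lt hmt
      have hnl : ¬ ((t:ℕ) < (m:ℕ)) := by
        have := hmt; rw [Fin.lt_iff_val_lt_val] at this; omega
      rw [if_neg hnm, if_neg hnl]
      rcases max_cases j l with ⟨hje, _⟩ | ⟨hje, _⟩
      · -- t = j, so m < j : g j m = 0
        have hmj : m < j := by rw [ht, hje] at hmt; exact hmt
        rw [hg, if_neg (by exact fun h => absurd h.symm (ne_of_lt hmj)),
          if_neg (by exact fun h => absurd hmj (asymm h))]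
        ring
      · -- t = l, so m < l : k m l = 0
        have hml : m < l := by rw [ht, hje] at hmt; exact hmt
        rw [hk, if_neg (ne_of_lt hml), if_neg (by exact fun h => absurd hml (asymm h))]
        ring
    · -- m = t
      have hnl : ¬ ((t:ℕ) < (m:ℕ)) := by rw [hmt]; omega
      rw [if_pos hmt, if_neg hnl, hmt]
      rcases lt_trichotomy j l with hjl | hjl | hjl
      · -- t = l
        have htl : t = l := by rw [ht]; exact max_eq_right (le_of_lt hjl)
        rw [htl, hg, hk, if_neg (ne_of_lt hjl), if_pos hjl, if_pos rfl, if_neg (ne_of_lt hjl)]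
        have h1 := hS0 l.castSucc; have h2 := hS0 l.succ
        field_simp; ring
      · have htj : t = j := by rw [ht, hjl]; exact max_self l
        rw [hjl] at htj ⊢
        rw [htj, hg, hk, if_pos rfl, if_pos rfl]
        have h1 := hS0 l.castSucc; have h2 := hS0 l.succ
        field_simp; ring
      · -- t = j
        have htj : t = j := by rw [ht]; exact max_eq_left (le_of_lt hjl)
        rw [htj, hg, hk, if_pos rfl, if_neg (by exact fun h => absurd h.symm (ne_of_lt hjl)),
          if_pos hjl, if_neg (ne_of_gt hjl)]
        have h1 := hS0 j.castSucc; have h2 := hS0 j.succ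
        field_simp; ring
    · -- t < m : both off-diagonal
      have hjm : j < m := lt_of_le_of_lt (le_max_left j l) hmt
      have hlm : l < m := lt_of_le_of_lt (le_max_right j l) hmt
      have hvl : (t:ℕ) < (m:ℕ) := by rw [← Fin.lt_iff_val_lt_val]; exact hmt
      rw [if_neg (ne_of_gt hmt), if_pos hvl, hg, hk,
        if_neg (ne_of_lt hjm), if_pos hjm, if_neg (by exact fun h => absurd h.symm (ne_of_lt hlm)),
        if_pos hlm]
      have h1 := hS0 m.castSucc; have h2 := hS0 m.succ
      have hab : (S m.succ ^ 2)⁻¹ - (S m.castSucc ^ 2)⁻¹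
          = A m * B m / (S m.castSucc ^ 2 * S m.succ ^ 2) := by
        field_simp
        linear_combination hG m
      rw [hab]
      field_simp; ring
  rw [Matrix.mul_apply, Finset.sum_congr rfl (fun m _ => claim1 m), Finset.sum_add_distrib,
    ← Finset.mul_sum, tele n S t, hlast,
    Finset.sum_ite_eq' Finset.univ t
      (fun _ => (if j = l then S j.castSucc ^ 2 else A j * B l) / S t.succ ^ 2),
    if_pos (Finset.mem_univ t)]
  rw [Matrix.add_apply, Matrix.one_apply, vecMulVec_apply]
  have h2 := hS0 t.succ
  by_cases hjl : j = l
  · subst hjl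
    have htj : t = j := by rw [ht]; exact max_self j
    rw [if_pos rfl, if_pos rfl, htj]
    have hs2 : S j.succ ^ 2 ≠ 0 := pow_ne_zero _ (hS0 _)
    linear_combination (S j.succ ^ 2)⁻¹ * hG j + inv_mul_cancel₀ hs2
  · rw [if_neg hjl, if_neg hjl]
    ring

lemma mul_vecMulVec {n : ℕ} (M : Matrix (Fin n) (Fin n) ℂ) (v w : Fin n → ℂ) :
    M * vecMulVec v w = vecMulVec (M *ᵥ v) w := by
  ext i j; simp [mul_apply, vecMulVec_apply, mulVec, dotProduct, Finset.sum_mul, mul_assoc]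

lemma vecMulVec_mul {n : ℕ} (M : Matrix (Fin n) (Fin n) ℂ) (v w : Fin n → ℂ) :
    vecMulVec v w * M = vecMulVec v (w ᵥ* M) := by
  ext i j; simp [mul_apply, vecMulVec_apply, vecMul, dotProduct, Finset.mul_sum, mul_assoc, mul_left_comm]

lemma inv_rev2 {ι : Type*} {n : ℕ} (M : ι → Matrix (Fin n) (Fin n) ℂ) (hM : ∀ i, IsUnit (M i)) :
    ∀ l : List ι, ((l.map fun i => (M i)⁻¹).reverse).prod * (l.map M).prod = 1 ∧
      (l.map M).prod * ((l.map fun i => (M i)⁻¹).reverse).prod = 1 := by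
  intro l
  induction l with
  | nil => simp
  | cons x t ih =>
    have h1 : (M x)⁻¹ * M x = 1 := Matrix.nonsing_inv_mul _ ((Matrix.isUnit_iff_isUnit_det _).mp (hM x))
    have h2 : M x * (M x)⁻¹ = 1 := Matrix.mul_nonsing_inv _ ((Matrix.isUnit_iff_isUnit_det _).mp (hM x))
    simp only [List.map_cons, List.reverse_cons, List.prod_append, List.prod_cons, List.prod_nil,
      mul_one]
    constructor
    · rw [mul_assoc, ← mul_assoc (M x)⁻¹, h1, one_mul, ih.1]
    · rw [mul_assoc (M x), ← mul_assoc (t.map M).prod, ih.2, one_mul, h2]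

lemma inv_rev3 {ι : Type*} {n : ℕ} (M : ι → Matrix (Fin n) (Fin n) ℂ) (hM : ∀ i, IsUnit (M i))
    (l : List ι) :
    (l.map fun i => (M i)⁻¹).prod * ((l.map M).reverse).prod = 1 ∧
      ((l.map M).reverse).prod * (l.map fun i => (M i)⁻¹).prod = 1 := by
  have := inv_rev2 M hM l.reverse
  simpa only [List.map_reverse, List.reverse_reverse] using this

lemma GK {n : ℕ} (g k : ℕ → Matrix (Fin n) (Fin n) ℂ) (v w : ℕ → Fin n → ℂ)
    (h : ∀ i, g i * k i = 1 + vecMulVec (v i) (w i)) :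
    ∀ d : ℕ, ((List.range d).map g).prod * (((List.range d).map k).reverse).prod
      = 1 + ∑ i ∈ Finset.range d, vecMulVec ((((List.range i).map g).prod) *ᵥ v i)
          (w i ᵥ* (((List.range i).map k).reverse).prod) := by
  intro d
  induction d with
  | zero => simp
  | succ d ih =>
    rw [List.range_succ, List.map_append, List.prod_append, List.map_append, List.reverse_append,
      List.prod_append]
    simp only [List.map_cons, List.map_nil, List.reverse_cons, List.reverse_nil,
      List.nil_append, List.prod_cons, List.prod_nil, mul_one]
    rw [mul_assoc, ← mul_assoc (g d), h d, add_mul, one_mul, mul_add, vecMulVec_mul,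
      mul_vecMulVec, ih, Finset.sum_range_succ, add_assoc]

def extM {n d : ℕ} (M : Fin d → Matrix (Fin n) (Fin n) ℂ) : ℕ → Matrix (Fin n) (Fin n) ℂ :=
  fun i => if h : i < d then M ⟨i, h⟩ else 1

def extV {n d : ℕ} (v : Fin d → Fin n → ℂ) : ℕ → Fin n → ℂ :=
  fun i => if h : i < d then v ⟨i, h⟩ else 0

lemma extM_coe {n d : ℕ} (M : Fin d → Matrix (Fin n) (Fin n) ℂ) (x : Fin d) :
    extM M (x : ℕ) = M x := by simp [extM, x.isLt]

lemma extV_coe {n d : ℕ} (v : Fin d → Fin n → ℂ) (x : Fin d) :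
    extV v (x : ℕ) = v x := by simp [extV, x.isLt]

/-- the identity `1ₙ − Σ_{α=1}^d Â^α B̂^α = (g₊,1⋯g₊,d)⁻¹ (k_1⁻¹⋯k_d⁻¹)`. -/
theorem statement14 (n d : ℕ) (hn : 1 ≤ n) (hd : 1 ≤ d)
    (a b : Fin d → Fin n → ℂ) (s : Fin d → Fin (n + 1) → ℂ)
    (hs0 : ∀ α j, s α j ≠ 0)
    (hsq : ∀ α j, s α j ^ 2 = 1 + ∑ k : Fin n, (if (j : ℕ) ≤ (k : ℕ) then a α k * b α k else 0))
    (hlast : ∀ α, s α (Fin.last n) = 1)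
    (gp km : Fin d → Matrix (Fin n) (Fin n) ℂ)
    (hgp : ∀ α j k, gp α j k =
      if j = k then s α j.castSucc / s α j.succ
      else if j < k then a α j * b α k / (s α k.castSucc * s α k.succ) else 0)
    (hkm : ∀ α j k, km α j k =
      if j = k then s α j.castSucc / s α j.succ
      else if k < j then a α j * b α k / (s α j.castSucc * s α j.succ) else 0)
    (Ah Bh : Fin d → Fin n → ℂ)
    (hAh : ∀ α : Fin d, Ah α =
      ((((List.finRange d).drop (α : ℕ)).map (fun γ => (gp γ)⁻¹)).reverse).prod *ᵥ a α)
    (hBh : ∀ α : Fin d, Bh α =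
      b α ᵥ* (((List.finRange d).drop (α : ℕ)).map (fun γ => (km γ)⁻¹)).prod) :
    (1 : Matrix (Fin n) (Fin n) ℂ) - ∑ α : Fin d, Matrix.vecMulVec (Ah α) (Bh α)
      = (((List.finRange d).map gp).prod)⁻¹ *
          ((List.finRange d).map (fun γ => (km γ)⁻¹)).prod := by
  -- difference of consecutive squares
  have hGa : ∀ (α : Fin d) (j : Fin n),
      s α j.castSucc ^ 2 = s α j.succ ^ 2 + a α j * b α j := by
    intro α j
    have h1 := hsq α j.castSucc
    have h2 := hsq α j.succ
    have key : ∀ k : Fin n,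
        (if ((j.castSucc : ℕ)) ≤ (k : ℕ) then a α k * b α k else 0)
          - (if ((j.succ : ℕ)) ≤ (k : ℕ) then a α k * b α k else 0)
        = if k = j then a α j * b α j else 0 := by
      intro k
      simp only [Fin.coe_castSucc, Fin.val_succ]
      by_cases h : k = j
      · subst h; rw [if_pos (le_refl _), if_neg (by omega), if_pos rfl]; ring
      · have hkj : (k : ℕ) ≠ (j : ℕ) := fun hh => h (Fin.ext hh)
        rw [if_neg h]
        by_cases h3 : (j : ℕ) ≤ (k : ℕ)
        · rw [if_pos h3, if_pos (by omega)]; ring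
        · rw [if_neg h3, if_neg (by omega)]; ring
    have hSum : (∑ k : Fin n, if ((j.castSucc : ℕ)) ≤ (k : ℕ) then a α k * b α k else 0)
        - (∑ k : Fin n, if ((j.succ : ℕ)) ≤ (k : ℕ) then a α k * b α k else 0)
        = a α j * b α j := by
      rw [← Finset.sum_sub_distrib, Finset.sum_congr rfl (fun k _ => key k),
        Finset.sum_ite_eq' Finset.univ j (fun _ => a α j * b α j), if_pos (Finset.mem_univ j)]
    linear_combination h1 - h2 + hSum
  -- invertibility
  have hUgp : ∀ α, IsUnit (gp α) := by
    intro α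
    have hBT : (gp α).BlockTriangular id := by
      intro i j hij
      have hij' : j < i := hij
      rw [hgp α i j, if_neg (ne_of_gt hij'), if_neg (fun h => absurd hij' (asymm h))]
    have hdet : (gp α).det ≠ 0 := by
      rw [Matrix.det_of_upperTriangular hBT]
      apply Finset.prod_ne_zero_iff.mpr
      intro i _
      rw [hgp α i i, if_pos rfl]
      exact div_ne_zero (hs0 _ _) (hs0 _ _)
    exact (Matrix.isUnit_iff_isUnit_det _).mpr (isUnit_iff_ne_zero.mpr hdet)
  have hUkm : ∀ α, IsUnit (km α) := by
    intro α
    have hBT : (km α).BlockTriangular OrderDual.toDual := by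
      intro i j hij
      have hij' : i < j := hij
      rw [hkm α i j, if_neg (ne_of_lt hij'), if_neg (fun h => absurd hij' (asymm h))]
    have hdet : (km α).det ≠ 0 := by
      rw [Matrix.det_of_lowerTriangular _ hBT]
      apply Finset.prod_ne_zero_iff.mpr
      intro i _
      rw [hkm α i i, if_pos rfl]
      exact div_ne_zero (hs0 _ _) (hs0 _ _)
    exact (Matrix.isUnit_iff_isUnit_det _).mpr (isUnit_iff_ne_zero.mpr hdet)
  -- ℕ-extensions
  have hfact : ∀ i, extM gp i * extM km i = 1 + vecMulVec (extV a i) (extV b i) := by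
    intro i
    by_cases h : i < d
    · simp only [extM, extV, dif_pos h]
      exact mul_key n (a ⟨i, h⟩) (b ⟨i, h⟩) (s ⟨i, h⟩) (hs0 _) (hGa _) (hlast _) _ _
        (hgp _) (hkm _)
    · simp only [extM, extV, dif_neg h]
      rw [one_mul]
      ext p q
      simp [vecMulVec_apply]
  have hUgN : ∀ i, IsUnit (extM gp i) := by
    intro i
    by_cases h : i < d
    · simp only [extM, dif_pos h]; exact hUgp _
    · simp only [extM, dif_neg h]; exact isUnit_one
  have hUkN : ∀ i, IsUnit (extM km i) := by
    intro i
    by_cases h : i < d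
    · simp only [extM, dif_pos h]; exact hUkm _
    · simp only [extM, dif_neg h]; exact isUnit_one
  -- list conversions
  have hmapg : ∀ l : List (Fin d), l.map gp = (l.map Fin.val).map (extM gp) := by
    intro l; rw [List.map_map]
    exact (List.map_congr_left (fun x _ => (extM_coe gp x).symm))
  have hmapk : ∀ l : List (Fin d), l.map km = (l.map Fin.val).map (extM km) := by
    intro l; rw [List.map_map]
    exact (List.map_congr_left (fun x _ => (extM_coe km x).symm))
  have hmapgi : ∀ l : List (Fin d),
      l.map (fun γ => (gp γ)⁻¹) = (l.map Fin.val).map (fun i => (extM gp i)⁻¹) := by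
    intro l; rw [List.map_map]
    refine List.map_congr_left (fun x _ => ?_)
    simp only [Function.comp_apply, extM_coe]
  have hmapki : ∀ l : List (Fin d),
      l.map (fun γ => (km γ)⁻¹) = (l.map Fin.val).map (fun i => (extM km i)⁻¹) := by
    intro l; rw [List.map_map]
    refine List.map_congr_left (fun x _ => ?_)
    simp only [Function.comp_apply, extM_coe]
  have hdrop : ∀ α : Fin d,
      ((List.finRange d).drop (α : ℕ)).map Fin.val = (List.range d).drop (α : ℕ) := by
    intro α; rw [List.map_drop, (show (List.finRange d).map Fin.val = List.range d from List.ext_getElem (by simp) (by simp))]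
  -- the ℕ-world summand
  set F : ℕ → Matrix (Fin n) (Fin n) ℂ := fun i =>
    vecMulVec (((((List.range d).drop i).map (fun j => (extM gp j)⁻¹)).reverse).prod *ᵥ extV a i)
      (extV b i ᵥ* (((List.range d).drop i).map (fun j => (extM km j)⁻¹)).prod) with hF
  have hterm : ∀ α : Fin d, vecMulVec (Ah α) (Bh α) = F (α : ℕ) := by
    intro α
    rw [hAh α, hBh α]
    simp only [hF]
    have e1 : ((List.finRange d).drop (α : ℕ)).map (fun γ => (gp γ)⁻¹)
        = ((List.range d).drop (α : ℕ)).map (fun i => (extM gp i)⁻¹) := by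
      rw [hmapgi, hdrop]
    have e2 : ((List.finRange d).drop (α : ℕ)).map (fun γ => (km γ)⁻¹)
        = ((List.range d).drop (α : ℕ)).map (fun i => (extM km i)⁻¹) := by
      rw [hmapki, hdrop]
    rw [e1, e2, extV_coe, extV_coe]
  have hLHS : ∑ α : Fin d, vecMulVec (Ah α) (Bh α) = ∑ i ∈ Finset.range d, F i := by
    rw [← Fin.sum_univ_eq_sum_range F d]
    exact Finset.sum_congr rfl (fun α _ => hterm α)
  have hR : (((List.finRange d).map gp).prod)⁻¹ *
      ((List.finRange d).map (fun γ => (km γ)⁻¹)).prod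
      = (((List.range d).map (extM gp)).prod)⁻¹ *
          ((List.range d).map (fun i => (extM km i)⁻¹)).prod := by
    rw [hmapg, hmapki, (show (List.finRange d).map Fin.val = List.range d from List.ext_getElem (by simp) (by simp))]
  rw [hLHS, hR]
  -- main computation
  have hGK := GK (extM gp) (extM km) (extV a) (extV b) hfact d
  have hGU : IsUnit ((List.range d).map (extM gp)).prod := by
    apply List.prod_isUnit
    intro m hm
    rw [List.mem_map] at hm
    obtain ⟨i, _, rfl⟩ := hm
    exact hUgN i
  have hGinv : (((List.range d).map (extM gp)).prod)⁻¹ * ((List.range d).map (extM gp)).prod = 1 :=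
    Matrix.nonsing_inv_mul _ ((Matrix.isUnit_iff_isUnit_det _).mp hGU)
  have hKK : (((List.range d).map (extM km)).reverse).prod *
      ((List.range d).map (fun i => (extM km i)⁻¹)).prod = 1 :=
    (inv_rev3 (extM km) hUkN (List.range d)).2
  have hX : ((List.range d).map (extM gp)).prod *
      ((1 : Matrix (Fin n) (Fin n) ℂ) - ∑ i ∈ Finset.range d, F i) *
      (((List.range d).map (extM km)).reverse).prod = 1 := by
    have hterm2 : ∀ i ∈ Finset.range d,
        ((List.range d).map (extM gp)).prod * F i * (((List.range d).map (extM km)).reverse).prod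
        = vecMulVec (((List.range i).map (extM gp)).prod *ᵥ extV a i)
            (extV b i ᵥ* (((List.range i).map (extM km)).reverse).prod) := by
      intro i hi
      rw [Finset.mem_range] at hi
      have htake : (List.range d).take i = List.range i := by
        rw [List.take_range, Nat.min_eq_left hi.le]
      have hsplitg : ((List.range d).map (extM gp)).prod
          = ((List.range i).map (extM gp)).prod * (((List.range d).drop i).map (extM gp)).prod := by
        conv_lhs => rw [← List.take_append_drop i (List.range d)]
        rw [List.map_append, List.prod_append, htake]
      have hsplitk : (((List.range d).map (extM km)).reverse).prod
          = (((List.range d).drop i).map (extM km)).reverse.prod *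
              (((List.range i).map (extM km)).reverse).prod := by
        conv_lhs => rw [← List.take_append_drop i (List.range d)]
        rw [List.map_append, List.reverse_append, List.prod_append, htake]
      have h1 : ((List.range d).map (extM gp)).prod *
          ((((List.range d).drop i).map (fun j => (extM gp j)⁻¹)).reverse).prod
          = ((List.range i).map (extM gp)).prod := by
        rw [hsplitg, mul_assoc, (inv_rev2 (extM gp) hUgN ((List.range d).drop i)).2, mul_one]
      have h2 : (((List.range d).drop i).map (fun j => (extM km j)⁻¹)).prod *
          (((List.range d).map (extM km)).reverse).prod
          = (((List.range i).map (extM km)).reverse).prod := by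
        rw [hsplitk, ← mul_assoc, (inv_rev3 (extM km) hUkN ((List.range d).drop i)).1, one_mul]
      simp only [hF]
      rw [mul_vecMulVec, vecMulVec_mul, Matrix.mulVec_mulVec, h1, Matrix.vecMul_vecMul, h2]
    rw [mul_sub, sub_mul, mul_one, Finset.mul_sum, Finset.sum_mul,
      Finset.sum_congr rfl hterm2, hGK]
    abel
  calc (1 : Matrix (Fin n) (Fin n) ℂ) - ∑ i ∈ Finset.range d, F i
      = (((List.range d).map (extM gp)).prod)⁻¹ *
          (((List.range d).map (extM gp)).prod *
            ((1 : Matrix (Fin n) (Fin n) ℂ) - ∑ i ∈ Finset.range d, F i) *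
            (((List.range d).map (extM km)).reverse).prod) *
          ((List.range d).map (fun i => (extM km i)⁻¹)).prod := by
        rw [show ∀ X : Matrix (Fin n) (Fin n) ℂ,
          (((List.range d).map (extM gp)).prod)⁻¹ *
            (((List.range d).map (extM gp)).prod * X *
              (((List.range d).map (extM km)).reverse).prod) *
            ((List.range d).map (fun i => (extM km i)⁻¹)).prod = X from ?_]
        intro X
        calc (((List.range d).map (extM gp)).prod)⁻¹ *
              (((List.range d).map (extM gp)).prod * X *
                (((List.range d).map (extM km)).reverse).prod) *
              ((List.range d).map (fun i => (extM km i)⁻¹)).prod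
            = ((((List.range d).map (extM gp)).prod)⁻¹ * ((List.range d).map (extM gp)).prod) *
                X * ((((List.range d).map (extM km)).reverse).prod *
                  ((List.range d).map (fun i => (extM km i)⁻¹)).prod) := by
              simp only [mul_assoc]
          _ = X := by rw [hGinv, hKK, one_mul, mul_one]
    _ = (((List.range d).map (extM gp)).prod)⁻¹ *
          ((List.range d).map (fun i => (extM km i)⁻¹)).prod := by
        rw [hX, mul_one]
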